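/- arXiv:2001.08267 — 6 statements merged into one kernel-verified Lean document; each statement's English description precedes it below -/
import Mathlib

section
/- The vertices of the zonotope Z = ∑_{i=0}^n [0,π]e_i are the only points of Z that lie on the boundary of the permutahedron Perm; equivalently, every point of Z that is not a vertex of Z satisfies all defining inequalities of Perm strictly. -/
open Real Finset

/-- Points of the zonotope `Z` (the image of the cube `[0,π]^{n+1}` in
`ℝ^{n+1}/ℝ(1,…,1)`) that are not vertices of `Z` satisfy all defining inequalities
of the permutahedron strictly.  A point of the cube maps to a vertex of `Z` iff some
translate of it by a multiple of `(1,…,1)` has all coordinates in `{0,π}` and is not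
constant (i.e. does not map to `0`). -/
theorem zonotope_nonvertex_in_perm_interior (n : ℕ) (hn : 1 ≤ n)
    (x : Fin (n + 1) → ℝ) (hx : ∀ i, x i ∈ Set.Icc (0 : ℝ) π)
    (hnv : ¬ ∃ c : ℝ, (∀ i, x i + c = 0 ∨ x i + c = π) ∧ (∃ i j, x i ≠ x j)) :
    ∀ Ineg Ipos : Finset (Fin (n + 1)), Ineg.Nonempty → Ipos.Nonempty →
      Disjoint Ineg Ipos → Ineg ∪ Ipos = Finset.univ →
      -((Ipos.card : ℝ) / (n + 1)) * ∑ i ∈ Ineg, x i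
          + (Ineg.card : ℝ) / (n + 1) * ∑ j ∈ Ipos, x j
        < (Ineg.card : ℝ) * Ipos.card / (n + 1) * π := by
  intro Ineg Ipos hne hpe hdisj huniv
  have hN : (0 : ℝ) < n + 1 := by positivity
  set r : ℝ := (Ineg.card : ℝ)
  set p : ℝ := (Ipos.card : ℝ)
  set Sm : ℝ := ∑ i ∈ Ineg, x i
  set Sp : ℝ := ∑ j ∈ Ipos, x j
  have hr : (0 : ℝ) < r := by
    have := Finset.card_pos.mpr hne
    unfold r; exact_mod_cast this
  have hp : (0 : ℝ) < p := by
    have := Finset.card_pos.mpr hpe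
    unfold p; exact_mod_cast this
  have hSm0 : 0 ≤ Sm := Finset.sum_nonneg fun i _ => (hx i).1
  have hSp : Sp ≤ p * π := by
    have := Finset.sum_le_card_nsmul Ipos x π (fun j _ => (hx j).2)
    simpa [Sp, p, nsmul_eq_mul] using this
  have key : -p * Sm + r * Sp < r * p * π := by
    by_cases hA : ∃ i ∈ Ineg, 0 < x i
    · have hSmpos : 0 < Sm := by
        obtain ⟨i, hi, hxi⟩ := hA
        exact Finset.sum_pos' (fun j _ => (hx j).1) ⟨i, hi, hxi⟩
      nlinarith
    · -- all x i = 0 on Ineg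
      push_neg at hA
      have hzero : ∀ i ∈ Ineg, x i = 0 := fun i hi => le_antisymm (hA i hi) (hx i).1
      have hB : ∃ j ∈ Ipos, x j < π := by
        by_contra hB
        push_neg at hB
        have hpi : ∀ j ∈ Ipos, x j = π := fun j hj => le_antisymm (hx j).2 (hB j hj)
        apply hnv
        refine ⟨0, fun i => ?_, ?_⟩
        · have : i ∈ Ineg ∪ Ipos := by rw [huniv]; exact Finset.mem_univ i
          rcases Finset.mem_union.mp this with h | h
          · left; simp [hzero i h]
          · right; simp [hpi i h]
        · obtain ⟨i0, hi0⟩ := hne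
          obtain ⟨j0, hj0⟩ := hpe
          exact ⟨i0, j0, by rw [hzero i0 hi0, hpi j0 hj0]; exact (Real.pi_ne_zero).symm⟩
      have hSplt : Sp < p * π := by
        obtain ⟨j, hj, hxj⟩ := hB
        have := Finset.sum_lt_sum (f := x) (g := fun _ => π)
          (fun k (hk : k ∈ Ipos) => (hx k).2) ⟨j, hj, hxj⟩
        simpa [Sp, p, mul_comm] using this
      have hSmz : Sm = 0 := Finset.sum_eq_zero hzero
      rw [hSmz]
      nlinarith
  rw [show -(p / (n + 1)) * Sm + r / (n + 1) * Sp = (-p * Sm + r * Sp) / (n + 1) by ring,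
    show r * p / (n + 1) * π = (r * p * π) / (n + 1) by ring]
  exact (div_lt_div_iff_of_pos_right hN).mpr key
end

section
/- A minimal stratum pair (V, E) with |V| = |E| = 2 on a cycle with vertices labeled by odd numbers t_1, t_3, ..., t_{2n+1} and edges labeled by even numbers t_0, t_2, ..., t_{2n} is interlacing (the two vertices of V separate the two edges of E on the cycle) if and only if the 4-element subset {t_{e_1}, t_{v_1}, t_{e_2}, t_{v_2}} ⊂ {t_0, ..., t_{2n+1}} satisfies the Gale evenness condition: between any two consecutive elements of this subset (in the cyclic order of all 2n+2 labels) there is an even number of other labels. -/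
/-- `cycBtwn m a b x`: on the cycle `ℤ/m` (labels `0,…,m-1`), the label `x` lies
strictly between `a` and `b` going counterclockwise from `a`. -/
def cycBtwn (m a b x : ℕ) : Prop :=
  0 < (x + m - a) % m ∧ (x + m - a) % m < (b + m - a) % m

lemma key1 {m s x : ℕ} (hs : s < m) (hx : x < m) :
    (x + m - s) % m = if s ≤ x then x - s else x + m - s := by
  rcases le_or_gt s x with h | h
  · rw [if_pos h]
    have hxx : x + m - s = (x - s) + m := by omega
    rw [hxx, Nat.add_mod_right, Nat.mod_eq_of_lt (by omega)]
  · rw [if_neg (by omega)]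
    exact Nat.mod_eq_of_lt (by omega)

lemma key2 {m s t u : ℕ} (hs : s < m) (ht : t < m) (hu : u < m) :
    cycBtwn m s t u ↔ ((s < u ∧ u < t) ∨ (u < t ∧ t < s) ∨ (t < s ∧ s < u)) := by
  unfold cycBtwn
  rw [key1 hs hu, key1 hs ht]
  split_ifs <;> omega

lemma key3 {m s t : ℕ} (hm : m % 2 = 0) (hs : s < m) (ht : t < m) :
    Even ((t + m - s) % m - 1) ↔ (s = t ∨ ¬ (s % 2 = t % 2)) := by
  rw [key1 hs ht, Nat.even_iff]
  split_ifs <;> omega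


lemma key3T {m s t : ℕ} (hm : m % 2 = 0) (hs : s < m) (ht : t < m)
    (hp : ¬ s % 2 = t % 2) : Even ((t + m - s) % m - 1) ↔ True := by
  rw [key3 hm hs ht]; tauto

lemma key3F {m s t : ℕ} (hm : m % 2 = 0) (hs : s < m) (ht : t < m)
    (hp : s % 2 = t % 2) (hne : s ≠ t) : Even ((t + m - s) % m - 1) ↔ False := by
  rw [key3 hm hs ht]; tauto

lemma key3E {m s : ℕ} : Even ((s + m - s) % m - 1) ↔ True := by
  have h : s + m - s = m := by omega
  simp [h]

set_option maxHeartbeats 4000000 in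
lemma aux (m A B C D : ℕ) (hm : m % 2 = 0)
    (hA : A < m) (hB : B < m) (hC : C < m) (hD : D < m)
    (hA2 : A % 2 = 1) (hB2 : B % 2 = 1) (hC2 : C % 2 = 0) (hD2 : D % 2 = 0)
    (hAB : A ≠ B) (hCD : C ≠ D) :
    Xor' (cycBtwn m A B C) (cycBtwn m A B D) ↔
      (∀ s ∈ ({C, A, D, B} : Finset ℕ), ∀ t ∈ ({C, A, D, B} : Finset ℕ), s ≠ t →
        (∀ u ∈ ({C, A, D, B} : Finset ℕ), ¬ cycBtwn m s t u) →
          Even ((t + m - s) % m - 1)) := by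
  simp only [Finset.forall_mem_insert, Finset.mem_singleton, forall_eq]
  rw [key2 hC hC hC,
    key2 hC hC hA,
    key2 hC hC hD,
    key2 hC hC hB,
    key2 hC hA hC,
    key2 hC hA hA,
    key2 hC hA hD,
    key2 hC hA hB,
    key2 hC hD hC,
    key2 hC hD hA,
    key2 hC hD hD,
    key2 hC hD hB,
    key2 hC hB hC,
    key2 hC hB hA,
    key2 hC hB hD,
    key2 hC hB hB,
    key2 hA hC hC,
    key2 hA hC hA,
    key2 hA hC hD,
    key2 hA hC hB,
    key2 hA hA hC,
    key2 hA hA hA,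
    key2 hA hA hD,
    key2 hA hA hB,
    key2 hA hD hC,
    key2 hA hD hA,
    key2 hA hD hD,
    key2 hA hD hB,
    key2 hA hB hC,
    key2 hA hB hA,
    key2 hA hB hD,
    key2 hA hB hB,
    key2 hD hC hC,
    key2 hD hC hA,
    key2 hD hC hD,
    key2 hD hC hB,
    key2 hD hA hC,
    key2 hD hA hA,
    key2 hD hA hD,
    key2 hD hA hB,
    key2 hD hD hC,
    key2 hD hD hA,
    key2 hD hD hD,
    key2 hD hD hB,
    key2 hD hB hC,
    key2 hD hB hA,
    key2 hD hB hD,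
    key2 hD hB hB,
    key2 hB hC hC,
    key2 hB hC hA,
    key2 hB hC hD,
    key2 hB hC hB,
    key2 hB hA hC,
    key2 hB hA hA,
    key2 hB hA hD,
    key2 hB hA hB,
    key2 hB hD hC,
    key2 hB hD hA,
    key2 hB hD hD,
    key2 hB hD hB,
    key2 hB hB hC,
    key2 hB hB hA,
    key2 hB hB hD,
    key2 hB hB hB,
    key3E (m := m) (s := C),
    key3T hm hC hA (by omega),
    key3F hm hC hD (by omega) hCD,
    key3T hm hC hB (by omega),
    key3T hm hA hC (by omega),
    key3E (m := m) (s := A),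
    key3T hm hA hD (by omega),
    key3F hm hA hB (by omega) hAB,
    key3F hm hD hC (by omega) hCD.symm,
    key3T hm hD hA (by omega),
    key3E (m := m) (s := D),
    key3T hm hD hB (by omega),
    key3T hm hB hC (by omega),
    key3F hm hB hA (by omega) hAB.symm,
    key3T hm hB hD (by omega),
    key3E (m := m) (s := B)]
  simp only [Xor', imp_false, iff_true, iff_false, implies_true, true_implies, and_true, true_and, not_true, not_false_iff, ne_eq, not_not, lt_irrefl, false_and, and_false, false_or, or_false, lt_self_iff_false]
  push_neg
  have h1 : A ≠ C := by omega
  have h2 : A ≠ D := by omega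
  have h3 : B ≠ C := by omega
  have h4 : B ≠ D := by omega
  clear hm hA hB hC hD hA2 hB2 hC2 hD2
  simp only [Xor] at *
  omega

/-- On an `(n+1)`-cycle, label the edge `z_i` by `t_{2i}` and the vertex between
`z_i` and `z_{i+1}` by `t_{2i+1}`.  A minimal pair `(V,E)` with `V = {v₁,v₂}`,
`E = {e₁,e₂}` is interlacing (the two vertices separate the two edges) iff the
4-element subset `{t_{2e₁}, t_{2v₁+1}, t_{2e₂}, t_{2v₂+1}}` of the `2n+2` cyclically
ordered labels satisfies Gale's evenness condition: between any two of its
cyclically consecutive elements lies an even number of other labels. -/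
theorem interlacing_iff_gale_evenness (n : ℕ) (hn : 1 ≤ n)
    (v₁ v₂ e₁ e₂ : Fin (n + 1)) (hv : v₁ ≠ v₂) (he : e₁ ≠ e₂) :
    let m := 2 * n + 2
    let pv : Fin (n + 1) → ℕ := fun v => 2 * v.val + 1
    let pe : Fin (n + 1) → ℕ := fun e => 2 * e.val
    let S : Finset ℕ := {pe e₁, pv v₁, pe e₂, pv v₂}
    (Xor' (cycBtwn m (pv v₁) (pv v₂) (pe e₁)) (cycBtwn m (pv v₁) (pv v₂) (pe e₂)))
      ↔ (∀ s ∈ S, ∀ t ∈ S, s ≠ t → (∀ u ∈ S, ¬ cycBtwn m s t u) →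
          Even ((t + m - s) % m - 1)) := by
  intro m pv pe S
  have hv1 := v₁.isLt
  have hv2 := v₂.isLt
  have he1 := e₁.isLt
  have he2 := e₂.isLt
  have hv' : v₁.val ≠ v₂.val := fun h => hv (Fin.ext h)
  have he' : e₁.val ≠ e₂.val := fun h => he (Fin.ext h)
  exact aux m (pv v₁) (pv v₂) (pe e₁) (pe e₂) (by omega)
    (by simp only [pv, m]; omega) (by simp only [pv, m]; omega)
    (by simp only [pe, m]; omega) (by simp only [pe, m]; omega)
    (by simp only [pv]; omega) (by simp only [pv]; omega)
    (by simp only [pe]; omega) (by simp only [pe]; omega)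
    (by simp only [pv]; omega) (by simp only [pe]; omega)
end

section
/- The tropical hyperplane S = {x ∈ Δ : there exist i ≠ j with x_i = x_j ≥ x_k for all k} is a deformation retract of the hypersimplex A = {x ∈ Δ : x_i ≤ 1/2 for all i}; in particular S ⊆ A and both are connected, and they are homotopy equivalent. -/
open Finset

namespace TropAux

variable {k : ℕ}

lemma erase_ne (i : Fin (k + 2)) : (Finset.univ.erase i).Nonempty := by
  rw [← Finset.card_pos, Finset.card_erase_of_mem (Finset.mem_univ i), Finset.card_univ,
    Fintype.card_fin]
  omega

noncomputable def Mf (x : Fin (k + 2) → ℝ) : ℝ := Finset.univ.sup' Finset.univ_nonempty x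

noncomputable def mf (x : Fin (k + 2) → ℝ) : ℝ :=
  Finset.univ.inf' Finset.univ_nonempty fun i => (Finset.univ.erase i).sup' (erase_ne i) x

noncomputable def gf (x : Fin (k + 2) → ℝ) (i : Fin (k + 2)) : ℝ := min (x i) (mf x)

noncomputable def sf (x : Fin (k + 2) → ℝ) : ℝ := ∑ i, gf x i

noncomputable def rf (x : Fin (k + 2) → ℝ) (i : Fin (k + 2)) : ℝ := gf x i / sf x

lemma le_Mf (x : Fin (k + 2) → ℝ) (i : Fin (k + 2)) : x i ≤ Mf x :=
  Finset.le_sup' x (Finset.mem_univ i)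

lemma exists_Mf (x : Fin (k + 2) → ℝ) : ∃ i, x i = Mf x := by
  obtain ⟨i, -, h⟩ := Finset.exists_mem_eq_sup' Finset.univ_nonempty x
  exact ⟨i, h.symm⟩

lemma exists_ne_mf_le (x : Fin (k + 2) → ℝ) (i : Fin (k + 2)) :
    ∃ j, j ≠ i ∧ mf x ≤ x j := by
  obtain ⟨j, hj, h⟩ := Finset.exists_mem_eq_sup' (erase_ne i) x
  refine ⟨j, (Finset.mem_erase.1 hj).1, ?_⟩
  rw [← h]
  exact Finset.inf'_le _ (Finset.mem_univ i)

lemma mf_le_Mf (x : Fin (k + 2) → ℝ) : mf x ≤ Mf x := by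
  obtain ⟨j, hj, h⟩ := exists_ne_mf_le x 0
  exact h.trans (le_Mf x j)

lemma mf_pos (x : Fin (k + 2) → ℝ) (hx0 : ∀ i, 0 ≤ x i) (hs : ∑ i, x i = 1)
    (hh : ∀ i, x i ≤ 1 / 2) : 0 < mf x := by
  rw [mf, Finset.lt_inf'_iff]
  intro i _
  by_contra h
  push_neg at h
  have hz : ∀ j ∈ Finset.univ.erase i, x j = 0 := fun j hj =>
    le_antisymm ((Finset.le_sup' x hj).trans h) (hx0 j)
  have : ∑ j ∈ Finset.univ.erase i, x j + x i = ∑ j, x j :=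
    Finset.sum_erase_add _ _ (Finset.mem_univ i)
  rw [Finset.sum_eq_zero hz, zero_add, hs] at this
  have := hh i
  linarith

lemma mf_nonneg (x : Fin (k + 2) → ℝ) (hx0 : ∀ i, 0 ≤ x i) (hs : ∑ i, x i = 1)
    (hh : ∀ i, x i ≤ 1 / 2) : 0 ≤ mf x := (mf_pos x hx0 hs hh).le

lemma gf_le_mf (x : Fin (k + 2) → ℝ) (i : Fin (k + 2)) : gf x i ≤ mf x := min_le_right _ _

/-- two distinct indices where `gf` equals `mf`. -/
lemma exists_pair (x : Fin (k + 2) → ℝ) :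
    ∃ i j, i ≠ j ∧ gf x i = mf x ∧ gf x j = mf x := by
  obtain ⟨i, hi⟩ := exists_Mf x
  obtain ⟨j, hji, hj⟩ := exists_ne_mf_le x i
  refine ⟨i, j, fun h => hji (h.symm), ?_, min_eq_right hj⟩
  have : mf x ≤ x i := hi ▸ mf_le_Mf x
  exact min_eq_right this

lemma sf_ge (x : Fin (k + 2) → ℝ) (hx0 : ∀ i, 0 ≤ x i) (hs : ∑ i, x i = 1)
    (hh : ∀ i, x i ≤ 1 / 2) : 2 * mf x ≤ sf x := by
  obtain ⟨i, j, hij, hi, hj⟩ := exists_pair x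
  have hnn : ∀ l, 0 ≤ gf x l := fun l => le_min (hx0 l) (mf_nonneg x hx0 hs hh)
  have hsub : ({i, j} : Finset (Fin (k + 2))) ⊆ Finset.univ := Finset.subset_univ _
  have := Finset.sum_le_sum_of_subset_of_nonneg hsub (fun l _ _ => hnn l)
  rw [Finset.sum_pair hij, hi, hj] at this
  calc 2 * mf x = mf x + mf x := by ring
    _ ≤ sf x := this

lemma sf_pos (x : Fin (k + 2) → ℝ) (hx0 : ∀ i, 0 ≤ x i) (hs : ∑ i, x i = 1)
    (hh : ∀ i, x i ≤ 1 / 2) : 0 < sf x :=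
  lt_of_lt_of_le (by linarith [mf_pos x hx0 hs hh]) (sf_ge x hx0 hs hh)

lemma rf_mem_A (x : Fin (k + 2) → ℝ) (hx0 : ∀ i, 0 ≤ x i) (hs : ∑ i, x i = 1)
    (hh : ∀ i, x i ≤ 1 / 2) :
    ((∀ i, 0 ≤ rf x i) ∧ ∑ i, rf x i = 1) ∧ ∀ i, rf x i ≤ 1 / 2 := by
  have hsf := sf_pos x hx0 hs hh
  have hnn : ∀ l, 0 ≤ gf x l := fun l => le_min (hx0 l) (mf_nonneg x hx0 hs hh)
  refine ⟨⟨fun i => div_nonneg (hnn i) hsf.le, ?_⟩, fun i => ?_⟩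
  · simp only [rf]; rw [← Finset.sum_div, ← sf]
    exact div_self hsf.ne'
  · have h1 : rf x i ≤ mf x / sf x := by
      apply div_le_div_of_nonneg_right (gf_le_mf x i) hsf.le |>.trans_eq rfl
    have h2 : mf x / sf x ≤ 1 / 2 := by
      rw [div_le_div_iff₀ hsf (by norm_num)]
      linarith [sf_ge x hx0 hs hh]
    exact h1.trans h2

lemma rf_mem_S (x : Fin (k + 2) → ℝ) (hx0 : ∀ i, 0 ≤ x i) (hs : ∑ i, x i = 1)
    (hh : ∀ i, x i ≤ 1 / 2) :
    ∃ i j, i ≠ j ∧ rf x i = rf x j ∧ ∀ l, rf x l ≤ rf x i := by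
  have hsf := sf_pos x hx0 hs hh
  obtain ⟨i, j, hij, hi, hj⟩ := exists_pair x
  refine ⟨i, j, hij, by rw [rf, rf, hi, hj], fun l => ?_⟩
  rw [rf, rf, hi]
  exact div_le_div_of_nonneg_right (gf_le_mf x l) hsf.le |>.trans_eq rfl

lemma rf_fix (x : Fin (k + 2) → ℝ) (hs : ∑ i, x i = 1)
    (hS : ∃ i j, i ≠ j ∧ x i = x j ∧ ∀ l, x l ≤ x i) : rf x = x := by
  obtain ⟨i, j, hij, hxij, hmax⟩ := hS
  have hMle : mf x ≤ Mf x := mf_le_Mf x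
  have hM : Mf x = x i := le_antisymm (Finset.sup'_le _ _ fun l _ => hmax l) (le_Mf x i)
  have hmge : x i ≤ mf x := by
    rw [mf, Finset.le_inf'_iff]
    intro l _
    by_cases h : i = l
    · subst h
      have hj : j ∈ Finset.univ.erase i := Finset.mem_erase.2 ⟨fun h => hij h.symm, Finset.mem_univ _⟩
      exact hxij.le.trans (Finset.le_sup' x hj)
    · exact Finset.le_sup' x (Finset.mem_erase.2 ⟨h, Finset.mem_univ _⟩)
  have hg : ∀ l, gf x l = x l := fun l =>
    min_eq_left ((hmax l).trans hmge)
  have hsf : sf x = 1 := by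
    rw [sf]
    simp only [hg]
    exact hs
  funext l
  rw [rf, hg, hsf, div_one]

lemma continuous_mf : Continuous (mf (k := k)) := by
  apply Continuous.finset_inf'_apply
  intro i _
  exact Continuous.finset_sup'_apply (erase_ne i) fun j _ => continuous_apply j

lemma continuous_gf (i : Fin (k + 2)) : Continuous fun x => gf x i :=
  (continuous_apply i).min continuous_mf

lemma continuous_sf : Continuous (sf (k := k)) :=
  continuous_finset_sum _ fun i _ => continuous_gf i

end TropAux
open TropAux in
/-- The tropical hyperplane `S` (points of the simplex where the maximum coordinate
is attained at least twice) is a deformation retract of the hypersimplex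
`A = {x ∈ Δ : x_i ≤ 1/2}`: `S ⊆ A`, both are connected, and there is a retraction
`r : A → A` with image in `S`, fixing `S`, homotopic to the identity (in particular
`S` and `A` are homotopy equivalent). -/
theorem tropical_hyperplane_deformation_retract (n : ℕ) (hn : 2 ≤ n) :
    let Δ : Set (Fin (n + 1) → ℝ) := {x | (∀ i, 0 ≤ x i) ∧ ∑ i, x i = 1}
    let A : Set (Fin (n + 1) → ℝ) := {x ∈ Δ | ∀ i, x i ≤ 1 / 2}
    let S : Set (Fin (n + 1) → ℝ) :=
      {x ∈ Δ | ∃ i j, i ≠ j ∧ x i = x j ∧ ∀ k, x k ≤ x i}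
    S ⊆ A ∧ IsConnected S ∧ IsConnected A ∧
      ∃ r : ContinuousMap A A,
        (∀ x : A, ((r x : A) : Fin (n + 1) → ℝ) ∈ S) ∧
        (∀ x : A, (x : Fin (n + 1) → ℝ) ∈ S → r x = x) ∧
        ContinuousMap.Homotopic r (ContinuousMap.id A) := by
  obtain ⟨k, rfl⟩ : ∃ k, n = k + 1 := ⟨n - 1, by omega⟩
  intro Δ A S
  -- S ⊆ A
  have hSA : S ⊆ A := by
    rintro x ⟨⟨hx0, hxs⟩, i, j, hij, hxij, hmax⟩
    refine ⟨⟨hx0, hxs⟩, fun l => (hmax l).trans ?_⟩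
    have hsub : ({i, j} : Finset (Fin (k + 2))) ⊆ Finset.univ := Finset.subset_univ _
    have h2 := Finset.sum_le_sum_of_subset_of_nonneg hsub (fun l _ _ => hx0 l)
    rw [Finset.sum_pair hij, hxs, ← hxij] at h2
    linarith
  -- membership facts for r
  have hrA : ∀ x ∈ A, rf x ∈ A := by
    rintro x ⟨⟨hx0, hxs⟩, hh⟩
    obtain ⟨⟨h1, h2⟩, h3⟩ := rf_mem_A x hx0 hxs hh
    exact ⟨⟨h1, h2⟩, h3⟩
  have hrS : ∀ x ∈ A, rf x ∈ S := by
    rintro x ⟨⟨hx0, hxs⟩, hh⟩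
    obtain ⟨⟨h1, h2⟩, h3⟩ := rf_mem_A x hx0 hxs hh
    exact ⟨⟨h1, h2⟩, rf_mem_S x hx0 hxs hh⟩
  have hfix : ∀ x ∈ S, rf x = x := by
    rintro x ⟨⟨hx0, hxs⟩, hex⟩
    exact rf_fix x hxs hex
  -- continuity of rf on A
  have hsf_ne : ∀ x ∈ A, sf x ≠ 0 := by
    rintro x ⟨⟨hx0, hxs⟩, hh⟩
    exact (sf_pos x hx0 hxs hh).ne'
  have hrcont : ContinuousOn (rf (k := k)) A := by
    apply continuousOn_pi.2
    intro i
    exact ((continuous_gf i).continuousOn).div (continuous_sf.continuousOn) hsf_ne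
  -- A convex, nonempty
  have hAconv : Convex ℝ A := by
    rintro x ⟨⟨hx0, hxs⟩, hxh⟩ y ⟨⟨hy0, hys⟩, hyh⟩ a b ha hb hab
    have hcoord : ∀ i, (a • x + b • y) i = a * x i + b * y i := fun i => by
      simp [smul_eq_mul]
    refine ⟨⟨fun i => ?_, ?_⟩, fun i => ?_⟩
    · rw [hcoord]
      exact add_nonneg (mul_nonneg ha (hx0 i)) (mul_nonneg hb (hy0 i))
    · simp only [hcoord]
      rw [Finset.sum_add_distrib, ← Finset.mul_sum, ← Finset.mul_sum, hxs, hys]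
      linarith
    · rw [hcoord]
      nlinarith [hx0 i, hy0 i, hxh i, hyh i]
  have hAne : A.Nonempty := by
    refine ⟨fun _ => 1 / (k + 2), ⟨⟨fun i => by positivity, ?_⟩, fun i => ?_⟩⟩
    · rw [Finset.sum_const, Finset.card_univ, Fintype.card_fin, nsmul_eq_mul]
      field_simp
      push_cast
      ring
    · rw [div_le_div_iff₀ (by positivity) (by norm_num)]
      linarith
  have hAconn : IsConnected A := hAconv.isConnected hAne
  -- S connected as image of A
  have hSimg : S = rf '' A := by
    apply Set.Subset.antisymm
    · intro x hx
      exact ⟨x, hSA hx, hfix x hx⟩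
    · rintro y ⟨x, hx, rfl⟩
      exact hrS x hx
  have hSconn : IsConnected S := hSimg ▸ hAconn.image _ hrcont
  -- the retraction as a continuous map A → A
  let r : ContinuousMap A A :=
    ⟨fun x => ⟨rf x, hrA x x.2⟩, by
      apply Continuous.subtype_mk
      exact (hrcont.comp_continuous continuous_subtype_val fun x => x.2)⟩
  refine ⟨hSA, hSconn, hAconn, r, fun x => hrS x x.2, fun x hx => Subtype.ext (hfix x hx), ?_⟩
  -- homotopy from r to id via straight lines
  have hmem : ∀ (t : unitInterval) (x : A),
      (1 - (t : ℝ)) • (rf (x : Fin (k + 2) → ℝ)) + (t : ℝ) • (x : Fin (k + 2) → ℝ) ∈ A := by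
    intro t x
    have h1 : (0 : ℝ) ≤ 1 - (t : ℝ) := by linarith [t.2.2]
    have h2 : (0 : ℝ) ≤ (t : ℝ) := t.2.1
    have := hAconv (hrA x x.2) x.2 h1 h2 (by ring)
    simpa using this
  refine ⟨⟨⟨fun p => ⟨(1 - (p.1 : ℝ)) • (rf (p.2 : Fin (k + 2) → ℝ))
      + (p.1 : ℝ) • ((p.2 : A) : Fin (k + 2) → ℝ), hmem p.1 p.2⟩, ?_⟩, ?_, ?_⟩⟩
  · apply Continuous.subtype_mk
    have hc1 : Continuous fun p : unitInterval × A => (p.1 : ℝ) :=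
      continuous_subtype_val.comp continuous_fst
    have hc2 : Continuous fun p : unitInterval × A => ((p.2 : A) : Fin (k + 2) → ℝ) :=
      continuous_subtype_val.comp continuous_snd
    have hc3 : Continuous fun p : unitInterval × A => rf ((p.2 : A) : Fin (k + 2) → ℝ) :=
      hrcont.comp_continuous hc2 fun p => p.2.2
    exact ((continuous_const.sub hc1).smul hc3).add (hc1.smul hc2)
  · intro x
    apply Subtype.ext
    simp [r]
  · intro x
    apply Subtype.ext
    simp
end

section
/- Every point of the hypersimplex A = {x ∈ Δ : x_i ≤ 1/2} at which some coordinate attains the maximum value twice satisfies max_i x_i ≤ 1/2; conversely every point of Δ with a unique maximal coordinate x_m can be moved along the segment decreasing x_m (redistributing proportionally to the others) until the maximum is attained twice, staying within A if it started in A. Consequently S ⊆ A and the retraction x ↦ r(x) along these segments is continuous on A. -/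
open Finset

/-- (i) Every point of the simplex at which the maximal coordinate is attained at
least twice satisfies `max_i x_i ≤ 1/2`, hence `S ⊆ A`;
(ii) every point of `A` with a unique maximal coordinate `x_m` can be moved along a
segment lowering `x_m` and scaling the other coordinates proportionally until the
maximum is attained twice, staying inside `A`;
(iii) the resulting retraction is realized by a continuous map `r : A → A` with
image in `S` fixing `S`. -/
theorem hypersimplex_retraction_to_tropical (n : ℕ) (hn : 2 ≤ n) :
    let Δ : Set (Fin (n + 1) → ℝ) := {x | (∀ i, 0 ≤ x i) ∧ ∑ i, x i = 1}
    let A : Set (Fin (n + 1) → ℝ) := {x ∈ Δ | ∀ i, x i ≤ 1 / 2}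
    let S : Set (Fin (n + 1) → ℝ) :=
      {x ∈ Δ | ∃ i j, i ≠ j ∧ x i = x j ∧ ∀ k, x k ≤ x i}
    (∀ x ∈ Δ, (∃ i j, i ≠ j ∧ x i = x j ∧ ∀ k, x k ≤ x i) → ∀ k, x k ≤ 1 / 2)
    ∧ S ⊆ A
    ∧ (∀ x ∈ A, ∀ m : Fin (n + 1), (∀ k, k ≠ m → x k < x m) →
        ∃ y ∈ S, y ∈ A ∧ segment ℝ x y ⊆ A ∧ y m ≤ x m ∧
          ∃ c : ℝ, 1 ≤ c ∧ ∀ j, j ≠ m → y j = c * x j)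
    ∧ (∃ r : ContinuousMap A A,
        (∀ x : A, ((r x : A) : Fin (n + 1) → ℝ) ∈ S) ∧
        (∀ x : A, (x : Fin (n + 1) → ℝ) ∈ S → r x = x)) := by
  intro Δ A S
  have hne : (Finset.univ.offDiag : Finset (Fin (n+1) × Fin (n+1))).Nonempty := by
    refine ⟨(⟨0, by omega⟩, ⟨1, by omega⟩), ?_⟩
    simp [Finset.mem_offDiag]
  -- part (i)
  have part1 : ∀ x ∈ Δ, (∃ i j, i ≠ j ∧ x i = x j ∧ ∀ k, x k ≤ x i) →
      ∀ k, x k ≤ 1 / 2 := by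
    intro x hx ⟨i, j, hij, hxij, hmax⟩ k
    have hsub := Finset.sum_le_sum_of_subset_of_nonneg
      (Finset.subset_univ ({i, j} : Finset (Fin (n+1)))) (fun l _ _ => hx.1 l)
    rw [Finset.sum_pair hij, hx.2] at hsub
    have := hmax k
    linarith
  have hSA : S ⊆ A := fun x hx => ⟨hx.1, part1 x hx.1 hx.2⟩
  -- second largest coordinate
  set M2 : (Fin (n + 1) → ℝ) → ℝ :=
    fun x => (Finset.univ.offDiag).sup' hne (fun p => min (x p.1) (x p.2)) with hM2def
  have hM2_ge : ∀ (x : Fin (n+1) → ℝ) (i j : Fin (n+1)), i ≠ j →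
      min (x i) (x j) ≤ M2 x := by
    intro x i j hij
    have hmem : (i, j) ∈ (Finset.univ.offDiag : Finset (Fin (n+1) × Fin (n+1))) := by
      simp [Finset.mem_offDiag, hij]
    exact Finset.le_sup' (fun p => min (x p.1) (x p.2)) hmem
  have hM2_ex : ∀ x : Fin (n+1) → ℝ, ∃ i j, i ≠ j ∧ M2 x = min (x i) (x j) := by
    intro x
    obtain ⟨p, hp, hp2⟩ := Finset.exists_mem_eq_sup' hne (fun p => min (x p.1) (x p.2))
    simp [Finset.mem_offDiag] at hp
    exact ⟨p.1, p.2, hp, hp2⟩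
  set s : (Fin (n + 1) → ℝ) → ℝ := fun x => ∑ k, min (x k) (M2 x) with hsdef
  set g : (Fin (n + 1) → ℝ) → (Fin (n + 1) → ℝ) :=
    fun x k => min (x k) (M2 x) / s x with hgdef
  -- positivity on A
  have hM2_pos : ∀ x ∈ A, 0 < M2 x := by
    intro x hx
    obtain ⟨i₀, -, hmax⟩ := Finset.exists_max_image Finset.univ x ⟨0, Finset.mem_univ 0⟩
    have hmax' : ∀ k, x k ≤ x i₀ := fun k => hmax k (Finset.mem_univ k)
    have : ∃ k, k ≠ i₀ ∧ 0 < x k := by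
      by_contra h
      push_neg at h
      have hz : ∀ k ∈ Finset.univ.erase i₀, x k = 0 := by
        intro k hk
        have hk' := Finset.ne_of_mem_erase hk
        exact le_antisymm (h k hk') (hx.1.1 k)
      have hsum := Finset.add_sum_erase Finset.univ x (Finset.mem_univ i₀)
      rw [Finset.sum_eq_zero hz, hx.1.2] at hsum
      have := hx.2 i₀
      linarith
    obtain ⟨k, hk, hkpos⟩ := this
    have h1 : min (x i₀) (x k) ≤ M2 x := hM2_ge x i₀ k (Ne.symm hk)
    rw [min_eq_right (hmax' k)] at h1
    linarith
  have hM2_nonneg : ∀ x ∈ A, 0 ≤ M2 x := fun x hx => (hM2_pos x hx).le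
  have hterm_nonneg : ∀ x ∈ A, ∀ k, 0 ≤ min (x k) (M2 x) :=
    fun x hx k => le_min (hx.1.1 k) (hM2_nonneg x hx)
  have h2M2 : ∀ x ∈ A, 2 * M2 x ≤ s x := by
    intro x hx
    obtain ⟨i, j, hij, hM2eq⟩ := hM2_ex x
    have hi : M2 x ≤ x i := hM2eq.le.trans (min_le_left _ _)
    have hj : M2 x ≤ x j := hM2eq.le.trans (min_le_right _ _)
    have hsub := Finset.sum_le_sum_of_subset_of_nonneg
      (Finset.subset_univ ({i, j} : Finset (Fin (n+1))))
      (fun l _ _ => hterm_nonneg x hx l)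
    rw [Finset.sum_pair hij, min_eq_right hi, min_eq_right hj] at hsub
    linarith
  have hs_pos : ∀ x ∈ A, 0 < s x :=
    fun x hx => lt_of_lt_of_le (by linarith [hM2_pos x hx]) (h2M2 x hx)
  -- g maps A to A
  have hgA : ∀ x ∈ A, g x ∈ A := by
    intro x hx
    refine ⟨⟨fun k => div_nonneg (hterm_nonneg x hx k) (hs_pos x hx).le, ?_⟩, ?_⟩
    · simp only [hgdef, ← Finset.sum_div]
      exact div_self (hs_pos x hx).ne'
    · intro k
      have h1 : min (x k) (M2 x) ≤ M2 x := min_le_right _ _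
      have h2 := h2M2 x hx
      rw [hgdef]
      rw [div_le_iff₀ (hs_pos x hx)]
      linarith
  -- g maps A to S
  have hgS : ∀ x ∈ A, g x ∈ S := by
    intro x hx
    obtain ⟨i, j, hij, hM2eq⟩ := hM2_ex x
    have hi : M2 x ≤ x i := hM2eq.le.trans (min_le_left _ _)
    have hj : M2 x ≤ x j := hM2eq.le.trans (min_le_right _ _)
    refine ⟨(hgA x hx).1, i, j, hij, ?_, ?_⟩
    · simp only [hgdef, min_eq_right hi, min_eq_right hj]
    · intro k
      simp only [hgdef, min_eq_right hi]
      exact (div_le_div_iff_of_pos_right (hs_pos x hx)).mpr (min_le_right _ _)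
  -- g fixes S
  have hgfix : ∀ x ∈ S, g x = x := by
    intro x hx
    obtain ⟨hxΔ, i, j, hij, hxij, hmax⟩ := hx
    have hM2top : M2 x = x i := by
      apply le_antisymm
      · apply Finset.sup'_le
        intro p hp
        exact (min_le_left _ _).trans (hmax p.1)
      · have := hM2_ge x i j hij
        rwa [← hxij, min_self] at this
    have hmins : ∀ k, min (x k) (M2 x) = x k := fun k => by
      rw [hM2top]; exact min_eq_left (hmax k)
    have hs1 : s x = 1 := by
      rw [hsdef]
      simp only [hmins]
      exact hxΔ.2
    funext k
    simp [hgdef, hmins, hs1]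
  have hAconv : Convex ℝ A := by
    intro p hp q hq a b ha hb hab
    refine ⟨⟨fun i => ?_, ?_⟩, fun i => ?_⟩
    · exact add_nonneg (mul_nonneg ha (hp.1.1 i)) (mul_nonneg hb (hq.1.1 i))
    · simp only [Pi.add_apply, Pi.smul_apply, smul_eq_mul]
      rw [Finset.sum_add_distrib, ← Finset.mul_sum, ← Finset.mul_sum, hp.1.2, hq.1.2]
      linarith
    · simp only [Pi.add_apply, Pi.smul_apply, smul_eq_mul]
      nlinarith [hp.2 i, hq.2 i, mul_le_mul_of_nonneg_left (hp.2 i) ha,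
        mul_le_mul_of_nonneg_left (hq.2 i) hb]
  refine ⟨part1, hSA, ?_, ?_⟩
  · -- part (ii)
    intro x hx m hm
    have hM2lt : M2 x < x m := by
      obtain ⟨i, j, hij, hM2eq⟩ := hM2_ex x
      rcases eq_or_ne i m with rfl | hi
      · have := hm j (Ne.symm hij)
        calc M2 x = min (x i) (x j) := hM2eq
        _ ≤ x j := min_le_right _ _
        _ < x i := this
      · calc M2 x = min (x i) (x j) := hM2eq
        _ ≤ x i := min_le_left _ _
        _ < x m := hm i hi
    have hub : ∀ k, k ≠ m → x k ≤ M2 x := by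
      intro k hk
      have h := hM2_ge x m k (Ne.symm hk)
      rwa [min_eq_right (hm k hk).le] at h
    have hsval : s x = 1 - x m + M2 x := by
      have h3 : ∀ k ∈ Finset.univ.erase m, min (x k) (M2 x) = x k :=
        fun k hk => min_eq_left (hub k (Finset.ne_of_mem_erase hk))
      calc s x = min (x m) (M2 x) + ∑ k ∈ Finset.univ.erase m, min (x k) (M2 x) :=
            (Finset.add_sum_erase _ _ (Finset.mem_univ m)).symm
      _ = M2 x + ∑ k ∈ Finset.univ.erase m, x k := by
          rw [min_eq_right hM2lt.le, Finset.sum_congr rfl h3]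
      _ = 1 - x m + M2 x := by
          have h2 := Finset.add_sum_erase Finset.univ x (Finset.mem_univ m)
          rw [hx.1.2] at h2
          linarith
    refine ⟨g x, hgS x hx, hgA x hx, hAconv.segment_subset hx (hgA x hx), ?_, ?_⟩
    · simp only [hgdef]
      rw [min_eq_right hM2lt.le, div_le_iff₀ (hs_pos x hx), hsval]
      nlinarith [mul_nonneg (by linarith [hx.2 m] : (0:ℝ) ≤ 1 - x m)
        (by linarith : (0:ℝ) ≤ x m - M2 x)]
    · refine ⟨1 / s x, ?_, ?_⟩
      · rw [le_div_iff₀ (hs_pos x hx), one_mul]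
        linarith [hsval, hM2lt]
      · intro j hj
        simp only [hgdef]
        rw [min_eq_left (hub j hj)]
        ring
  · -- part (iii)
    have hM2cont : Continuous M2 := by
      apply Continuous.finset_sup'_apply hne
      intro p _
      exact (continuous_apply p.1).min (continuous_apply p.2)
    have hscont : Continuous s := by
      apply continuous_finset_sum
      intro k _
      exact (continuous_apply k).min hM2cont
    have hcont : Continuous fun (x : A) => g x.1 := by
      apply continuous_pi
      intro k
      exact Continuous.div
        (((continuous_apply k).min hM2cont).comp continuous_subtype_val)
        (hscont.comp continuous_subtype_val)
        (fun x => (hs_pos x.1 x.2).ne')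
    exact ⟨⟨fun x => ⟨g x.1, hgA x.1 x.2⟩, hcont.subtype_mk _⟩,
      fun x => hgS x.1 x.2, fun x hxS => Subtype.ext (hgfix x.1 hxS)⟩
end

section
/- Projected to the torus T^n = (ℝ^{n+1}/ℝ)/2πΛ*, the permutahedron Perm has exactly n! distinct vertices: the (n+1)! vertices ρ_σ̄ = (π/(n+1))[1, 3, ..., 2n+1] (coordinates assigned according to a permutation σ̄ of {0,...,n}) fall into classes of size n+1 under translation by the lattice 2πΛ* = 2π(ℤ^{n+1}/ℤ), two vertices being identified iff their permutations differ by a cyclic rotation. -/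
open Real

private lemma fin_modeq_add' {m : ℕ} (a b : Fin (m+1)) :
    (((a + b : Fin (m+1)) : ℕ) : ℤ) ≡ ((a:ℕ):ℤ) + ((b:ℕ):ℤ) [ZMOD (m+1)] := by
  have h : ((a + b : Fin (m+1)) : ℕ) = ((a:ℕ) + (b:ℕ)) % (m+1) := Fin.val_add a b
  rw [h]
  push_cast [Int.natCast_mod]
  exact Int.emod_emod_of_dvd _ dvd_rfl

private lemma fin_eq_of_modeq' {m : ℕ} (a b : Fin (m+1))
    (h : ((a:ℕ):ℤ) ≡ ((b:ℕ):ℤ) [ZMOD (m+1)]) : a = b := by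
  have hd : ((m:ℤ)+1) ∣ ((b:ℕ):ℤ) - ((a:ℕ):ℤ) := by exact_mod_cast h.dvd
  have hz : ((b:ℕ):ℤ) - ((a:ℕ):ℤ) = 0 := by
    refine Int.eq_zero_of_abs_lt_dvd hd ?_
    have ha := a.isLt; have hb := b.isLt
    rw [abs_lt]
    constructor <;> push_cast <;> omega
  exact Fin.ext (by omega)

private lemma key_iff' (n : ℕ) (σ τ : Equiv.Perm (Fin (n+1))) :
    (∃ c : ℝ, ∃ mm : Fin (n+1) → ℤ, ∀ i,
        π/(n+1) * (2 * ((σ.symm i : Fin (n+1)):ℕ) + 1)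
          - π/(n+1) * (2 * ((τ.symm i : Fin (n+1)):ℕ) + 1) = 2*π*mm i + c)
    ↔ ∃ j : Fin (n+1), ∀ i, σ.symm i = τ.symm i + j := by
  have hN : ((n:ℝ)+1) ≠ 0 := by positivity
  have hπ : (2:ℝ)*π ≠ 0 := by
    have := Real.pi_pos; positivity
  constructor
  · rintro ⟨c, mm, h⟩
    have h' : ∀ i : Fin (n+1),
        ((σ.symm i : Fin (n+1)) : ℤ) - ((τ.symm i : Fin (n+1)) : ℤ)
          - (((σ.symm 0 : Fin (n+1)) : ℤ) - ((τ.symm 0 : Fin (n+1)) : ℤ))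
          = ((n:ℤ)+1) * (mm i - mm 0) := by
      intro i
      have hi := h i; have h0 := h 0
      have hr : (2*π) * ((((σ.symm i : Fin (n+1)):ℕ):ℝ) - (((τ.symm i : Fin (n+1)):ℕ):ℝ)
          - ((((σ.symm 0 : Fin (n+1)):ℕ):ℝ) - (((τ.symm 0 : Fin (n+1)):ℕ):ℝ)))
          = (2*π) * (((n:ℝ)+1) * ((mm i : ℝ) - (mm 0 : ℝ))) := by
        field_simp at hi h0
        ring_nf at hi h0 ⊢
        linarith
      have := mul_left_cancel₀ hπ hr
      exact_mod_cast this
    refine ⟨σ.symm 0 - τ.symm 0, fun i => ?_⟩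
    apply fin_eq_of_modeq'
    have hj : ((τ.symm 0 + (σ.symm 0 - τ.symm 0) : Fin (n+1))) = σ.symm 0 := by
      abel
    have hjz := fin_modeq_add' (τ.symm 0) (σ.symm 0 - τ.symm 0)
    rw [hj] at hjz
    have hadd := fin_modeq_add' (τ.symm i) (σ.symm 0 - τ.symm 0)
    have e1 : (((σ.symm 0 - τ.symm 0 : Fin (n+1))) : ℤ) ≡
        ((σ.symm 0 : Fin (n+1)) : ℤ) - ((τ.symm 0 : Fin (n+1)) : ℤ) [ZMOD ((n:ℕ)+1)] := by
      simpa using (hjz.sub_right (((τ.symm 0 : Fin (n+1)) : ℤ))).symm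
    have hcong0 : ((σ.symm i : Fin (n+1)) : ℤ) ≡
        ((τ.symm i : Fin (n+1)) : ℤ) + (((σ.symm 0 : Fin (n+1)) : ℤ) - ((τ.symm 0 : Fin (n+1)) : ℤ))
          [ZMOD ((n:ℕ)+1)] :=
      Int.ModEq.symm (Int.modEq_iff_dvd.mpr ⟨mm i - mm 0, by linarith [h' i]⟩)
    exact (hcong0.trans ((e1.symm).add_left _)).trans hadd.symm
  · rintro ⟨j, hj⟩
    refine ⟨2*π*((j:ℕ):ℝ)/((n:ℝ)+1), fun i =>
      (((σ.symm i : Fin (n+1)) : ℤ) - ((τ.symm i : Fin (n+1)) : ℤ) - ((j:ℕ):ℤ)) / ((n:ℤ)+1),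
      fun i => ?_⟩
    have hadd := fin_modeq_add' (τ.symm i) j
    rw [← hj i] at hadd
    have hdvd : ((n:ℤ)+1) ∣ ((σ.symm i : Fin (n+1)) : ℤ) - ((τ.symm i : Fin (n+1)) : ℤ) - ((j:ℕ):ℤ) := by
      obtain ⟨k, hk⟩ := hadd.dvd
      exact ⟨-k, by linarith⟩
    have hmm : ((n:ℤ)+1) * ((((σ.symm i : Fin (n+1)) : ℤ) - ((τ.symm i : Fin (n+1)) : ℤ) - ((j:ℕ):ℤ)) / ((n:ℤ)+1))
        = ((σ.symm i : Fin (n+1)) : ℤ) - ((τ.symm i : Fin (n+1)) : ℤ) - ((j:ℕ):ℤ) :=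
      Int.mul_ediv_cancel' hdvd
    have hmmR : ((n:ℝ)+1) * (((((σ.symm i : Fin (n+1)) : ℤ) - ((τ.symm i : Fin (n+1)) : ℤ) - ((j:ℕ):ℤ)) / ((n:ℤ)+1) : ℤ) : ℝ)
        = (((σ.symm i : Fin (n+1)):ℕ):ℝ) - (((τ.symm i : Fin (n+1)):ℕ):ℝ) - (((j:ℕ):ℕ):ℝ) := by
      exact_mod_cast hmm
    have goal' : π/((n:ℝ)+1) * (2 * (((σ.symm i : Fin (n+1)):ℕ):ℝ) + 1)
          - π/((n:ℝ)+1) * (2 * (((τ.symm i : Fin (n+1)):ℕ):ℝ) + 1)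
        = 2*π*((((((σ.symm i : Fin (n+1)) : ℤ) - ((τ.symm i : Fin (n+1)) : ℤ) - ((j:ℕ):ℤ)) / ((n:ℤ)+1) : ℤ)):ℝ)
            * (((n:ℝ)+1) * ((n:ℝ)+1)⁻¹) + 2*π*((j:ℕ):ℝ)/((n:ℝ)+1) := by
      linear_combination (-(2*π)/((n:ℝ)+1)) * hmmR
    rw [mul_inv_cancel₀ hN, mul_one] at goal'
    exact goal'

private lemma bridge' (n : ℕ) (σ τ : Equiv.Perm (Fin (n+1))) (j : Fin (n+1)) :
    (∀ i, σ.symm i = τ.symm i + j) ↔ ∀ k, τ k = σ (k + j) := by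
  constructor
  · intro h k
    have h2 := h (τ k)
    rw [Equiv.symm_apply_apply] at h2
    rw [← h2, Equiv.apply_symm_apply]
  · intro h i
    have h2 := h (τ.symm i)
    rw [Equiv.apply_symm_apply] at h2
    have := congrArg σ.symm h2
    simpa using this

private lemma card_fix' (n : ℕ) :
    ((Finset.univ.filter (fun τ : Equiv.Perm (Fin (n+1)) => τ 0 = 0)).card = Nat.factorial n) := by
  have : Finset.univ.filter (fun τ : Equiv.Perm (Fin (n+1)) => τ 0 = 0)
      = Finset.univ.image (fun e : Equiv.Perm (Fin n) => Equiv.Perm.decomposeFin.symm (0, e)) := by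
    ext τ
    simp only [Finset.mem_filter, Finset.mem_univ, true_and, Finset.mem_image]
    constructor
    · intro h0
      refine ⟨(Equiv.Perm.decomposeFin τ).2, ?_⟩
      have h1 : Equiv.Perm.decomposeFin.symm (Equiv.Perm.decomposeFin τ) = τ :=
        Equiv.symm_apply_apply _ _
      have h2 : (Equiv.Perm.decomposeFin τ).1 = 0 := by
        have := Equiv.Perm.decomposeFin_symm_apply_zero (Equiv.Perm.decomposeFin τ).1
          (Equiv.Perm.decomposeFin τ).2
        rw [Prod.mk.eta, h1] at this
        rw [← this, h0]
      rw [← h2, Prod.mk.eta, h1]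
    · rintro ⟨e, rfl⟩
      exact Equiv.Perm.decomposeFin_symm_apply_zero 0 e
  rw [this, Finset.card_image_of_injective _ (fun a b hab => by
      simpa using Equiv.Perm.decomposeFin.symm.injective hab),
    Finset.card_univ, Fintype.card_perm, Fintype.card_fin]

/-- The vertices `ρ_σ̄` of the permutahedron (with coordinates `x_{i_k} = (π/(n+1))(2k+1)`
for a permutation `σ̄ = (i_0,…,i_n)`) become identified in the torus
`(ℝ^{n+1}/ℝ)/2πΛ*` exactly when the permutations differ by a cyclic shift; hence the
`(n+1)!` vertices fall into classes of size `n+1` and the permutahedron has exactly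
`n!` distinct vertices in the torus. -/
theorem perm_vertices_in_torus (n : ℕ) (hn : 1 ≤ n) :
    let ρ : Equiv.Perm (Fin (n + 1)) → Fin (n + 1) → ℝ :=
      fun σ i => π / (n + 1) * (2 * ((σ.symm i : Fin (n + 1)) : ℕ) + 1)
    let R : Equiv.Perm (Fin (n + 1)) → Equiv.Perm (Fin (n + 1)) → Prop :=
      fun σ τ => ∃ c : ℝ, ∃ mm : Fin (n + 1) → ℤ,
        ∀ i, ρ σ i - ρ τ i = 2 * π * mm i + c
    (∀ σ τ : Equiv.Perm (Fin (n + 1)),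
        R σ τ ↔ ∃ j : Fin (n + 1), ∀ k : Fin (n + 1), τ k = σ (k + j))
    ∧ ∃ T : Finset (Equiv.Perm (Fin (n + 1))), T.card = Nat.factorial n ∧
        ∀ σ : Equiv.Perm (Fin (n + 1)), ∃! τ, τ ∈ T ∧ R σ τ := by
  intro ρ R
  have hpart1 : ∀ σ τ : Equiv.Perm (Fin (n + 1)),
      R σ τ ↔ ∃ j : Fin (n + 1), ∀ k : Fin (n + 1), τ k = σ (k + j) := by
    intro σ τ
    have : R σ τ ↔ ∃ j : Fin (n+1), ∀ i, σ.symm i = τ.symm i + j := by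
      simp only [R, ρ]
      exact key_iff' n σ τ
    rw [this]
    exact exists_congr fun j => bridge' n σ τ j
  refine ⟨hpart1, Finset.univ.filter (fun τ : Equiv.Perm (Fin (n+1)) => τ 0 = 0),
    card_fix' n, fun σ => ?_⟩
  set j : Fin (n+1) := σ.symm 0 with hjdef
  refine ⟨(Equiv.addRight j).trans σ, ⟨?_, ?_⟩, ?_⟩
  · simp [Finset.mem_filter, Equiv.trans_apply, Equiv.coe_addRight, hjdef]
  · rw [hpart1]
    exact ⟨j, fun k => rfl⟩
  · rintro τ' ⟨hmem, hR⟩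
    rw [hpart1] at hR
    obtain ⟨j', hj'⟩ := hR
    simp only [Finset.mem_filter, Finset.mem_univ, true_and] at hmem
    have hj'0 : σ j' = 0 := by
      have := hj' 0
      rw [zero_add, hmem] at this
      exact this.symm
    have hjj : j' = j := by
      rw [hjdef, ← hj'0, Equiv.symm_apply_apply]
    ext k
    rw [hj' k, hjj]
    rfl
end

section
/- In the dualizing subdivision of the simplex Δ, the cell Δ_{I'J'} is a face of the cell Δ_{IJ} if and only if I ⊆ I' ⊆ J' ⊆ J, where Δ_{IJ} = Conv{ barycenter of Δ_K : I ⊆ K ⊆ J } for nonempty I ⊆ J ⊆ {0,...,n}; moreover Δ_{IJ} is a polytope of dimension |J| − |I| combinatorially isomorphic to a cube of that dimension. -/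
open Finset

set_option maxHeartbeats 2000000

lemma cube_mem_hull {ι : Type} [Fintype ι] [DecidableEq ι]
    (I J : Finset ι) (hIJ : I ⊆ J) (s : Finset ι)
    (y : ((J \ I : Finset ι) : Type) → ℝ)
    (hy : ∀ j, y j ∈ Set.Icc (0:ℝ) 1)
    (h01 : ∀ j : ((J \ I : Finset ι) : Type), (j : ι) ∉ s → y j = 0 ∨ y j = 1) :
    (fun i => if i ∈ I then (1:ℝ) else if h : i ∈ J \ I then y ⟨i, h⟩ else 0)
      ∈ convexHull ℝ {z : ι → ℝ | ∃ K, I ⊆ K ∧ K ⊆ J ∧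
          z = fun i => if i ∈ K then (1:ℝ) else 0} := by
  classical
  induction s using Finset.induction_on generalizing y with
  | empty =>
      apply subset_convexHull
      refine ⟨I ∪ ((J \ I).attach.filter (fun j => y j = 1)).image Subtype.val,
        Finset.subset_union_left, ?_, ?_⟩
      · apply Finset.union_subset hIJ
        intro x hx
        simp only [Finset.mem_image, Finset.mem_filter, Finset.mem_attach, true_and] at hx
        obtain ⟨j, _, rfl⟩ := hx
        exact (Finset.mem_sdiff.mp j.2).1
      · funext i
        by_cases hiI : i ∈ I
        · simp [hiI]
        · by_cases hiJI : i ∈ J \ I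
          · rcases h01 ⟨i, hiJI⟩ (Finset.notMem_empty i) with h0 | h1
            · have : i ∉ I ∪ ((J \ I).attach.filter (fun j => y j = 1)).image Subtype.val := by
                simp only [Finset.mem_union, Finset.mem_image, Finset.mem_filter,
                  Finset.mem_attach, true_and, not_or]
                refine ⟨hiI, ?_⟩
                rintro ⟨j, hj1, rfl⟩
                rw [show j = ⟨(j : ι), hiJI⟩ from Subtype.ext rfl] at hj1
                rw [hj1] at h0
                norm_num at h0
              simp [hiI, hiJI, h0, this]
            · have : i ∈ I ∪ ((J \ I).attach.filter (fun j => y j = 1)).image Subtype.val := by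
                simp only [Finset.mem_union, Finset.mem_image, Finset.mem_filter,
                  Finset.mem_attach, true_and]
                exact Or.inr ⟨⟨i, hiJI⟩, h1, rfl⟩
              simp [hiI, hiJI, h1, this]
          · have : i ∉ I ∪ ((J \ I).attach.filter (fun j => y j = 1)).image Subtype.val := by
              simp only [Finset.mem_union, Finset.mem_image, Finset.mem_filter,
                Finset.mem_attach, true_and, not_or]
              exact ⟨hiI, by rintro ⟨j, _, rfl⟩; exact hiJI (Finset.mem_sdiff.mpr
                ⟨(Finset.mem_sdiff.mp j.2).1, (Finset.mem_sdiff.mp j.2).2⟩)⟩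
            simp [hiI, hiJI, this]
  | @insert a s ha ih =>
      by_cases haJ : a ∈ J \ I
      · have hc01 := hy ⟨a, haJ⟩
        set c := y ⟨a, haJ⟩ with hcdef
        set y0 := Function.update y ⟨a, haJ⟩ 0 with hy0def
        set y1 := Function.update y ⟨a, haJ⟩ 1 with hy1def
        have hy0 : ∀ j, y0 j ∈ Set.Icc (0:ℝ) 1 := by
          intro j
          rcases eq_or_ne j ⟨a, haJ⟩ with rfl | hne
          · simp [hy0def]
          · simpa [hy0def, Function.update_of_ne hne] using hy j
        have hy1 : ∀ j, y1 j ∈ Set.Icc (0:ℝ) 1 := by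
          intro j
          rcases eq_or_ne j ⟨a, haJ⟩ with rfl | hne
          · simp [hy1def]
          · simpa [hy1def, Function.update_of_ne hne] using hy j
        have h010 : ∀ j : ((J \ I : Finset ι) : Type), (j : ι) ∉ s → y0 j = 0 ∨ y0 j = 1 := by
          intro j hj
          rcases eq_or_ne j ⟨a, haJ⟩ with rfl | hne
          · left; simp [hy0def]
          · rw [hy0def, Function.update_of_ne hne]
            apply h01
            simp only [Finset.mem_insert, not_or]
            exact ⟨fun h => hne (Subtype.ext h), hj⟩
        have h011 : ∀ j : ((J \ I : Finset ι) : Type), (j : ι) ∉ s → y1 j = 0 ∨ y1 j = 1 := by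
          intro j hj
          rcases eq_or_ne j ⟨a, haJ⟩ with rfl | hne
          · right; simp [hy1def]
          · rw [hy1def, Function.update_of_ne hne]
            apply h01
            simp only [Finset.mem_insert, not_or]
            exact ⟨fun h => hne (Subtype.ext h), hj⟩
        have m0 := ih y0 hy0 h010
        have m1 := ih y1 hy1 h011
        have key : (fun i => if i ∈ I then (1:ℝ) else if h : i ∈ J \ I then y ⟨i, h⟩ else 0)
            = (1 - c) • (fun i => if i ∈ I then (1:ℝ) else if h : i ∈ J \ I then y0 ⟨i, h⟩ else 0)
              + c • (fun i => if i ∈ I then (1:ℝ) else if h : i ∈ J \ I then y1 ⟨i, h⟩ else 0) := by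
          funext i
          simp only [Pi.add_apply, Pi.smul_apply, smul_eq_mul]
          by_cases hiI : i ∈ I
          · simp only [hiI, if_true]; ring
          · by_cases hiJ : i ∈ J \ I
            · rcases eq_or_ne i a with rfl | hne
              · have e : (⟨i, hiJ⟩ : ((J \ I : Finset ι) : Type)) = ⟨i, haJ⟩ := rfl
                simp only [hiI, if_false, hiJ, dif_pos, e, hy0def, hy1def,
                  Function.update_self]
                ring
              · have hne' : (⟨i, hiJ⟩ : ((J \ I : Finset ι) : Type)) ≠ ⟨a, haJ⟩ :=
                  fun h => hne (congrArg Subtype.val h)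
                simp only [hiI, if_false, hiJ, dif_pos, hy0def, hy1def,
                  Function.update_of_ne hne']
                ring
            · simp only [hiI, if_false, hiJ, dif_neg, not_false_iff]; ring
        rw [key]
        exact (convex_convexHull ℝ _) m0 m1 (by linarith [hc01.2]) hc01.1 (by ring)
      · apply ih y hy
        intro j hj
        apply h01
        simp only [Finset.mem_insert, not_or]
        exact ⟨fun h => haJ (h ▸ j.2), hj⟩

/-- The cells of the dualizing subdivision of the simplex `Δ`:
`Δ_{IJ} = Conv{barycenter of Δ_K : I ⊆ K ⊆ J}` for nonempty `I ⊆ J ⊆ {0,…,n}`.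
(a) `Δ_{IJ}` is a copy of a cube of dimension `|J \ I|` (there is a continuous
bijection from the cube `[0,1]^{J\I}` onto it);
(b) `Δ_{I'J'}` is a face of (in particular, contained in) `Δ_{IJ}` iff
`I ⊆ I' ⊆ J' ⊆ J`. -/
theorem dualizing_subdivision_cells (n : ℕ)
    (bary : Finset (Fin (n + 1)) → (Fin (n + 1) → ℝ))
    (hbary : ∀ K, ∀ i, bary K i = if i ∈ K then (1 : ℝ) / K.card else 0)
    (cell : Finset (Fin (n + 1)) → Finset (Fin (n + 1)) → Set (Fin (n + 1) → ℝ))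
    (hcell : ∀ I J, cell I J =
      convexHull ℝ {x | ∃ K : Finset (Fin (n + 1)), I ⊆ K ∧ K ⊆ J ∧ x = bary K})
    (I J : Finset (Fin (n + 1))) (hI : I.Nonempty) (hIJ : I ⊆ J) :
    (∃ f : (((J \ I : Finset (Fin (n + 1))) : Type) → ℝ) → (Fin (n + 1) → ℝ),
        Continuous f ∧
        Set.BijOn f {y | ∀ j, y j ∈ Set.Icc (0 : ℝ) 1} (cell I J))
    ∧ (∀ I' J' : Finset (Fin (n + 1)), I'.Nonempty → I' ⊆ J' →
        (cell I' J' ⊆ cell I J ↔ (I ⊆ I' ∧ J' ⊆ J))) := by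
  classical
  obtain ⟨i₀, hi₀⟩ := hI
  have hI : I.Nonempty := ⟨i₀, hi₀⟩
  set clamp : ℝ → ℝ := fun t => max 0 (min t 1) with hclampdef
  set num : (((J \ I : Finset (Fin (n+1))) : Type) → ℝ) → (Fin (n+1) → ℝ) :=
    fun y i => if i ∈ I then 1 else if h : i ∈ J \ I then clamp (y ⟨i, h⟩) else 0 with hnumdef
  set S : (((J \ I : Finset (Fin (n+1))) : Type) → ℝ) → ℝ := fun y => ∑ i, num y i with hSdef
  set f : (((J \ I : Finset (Fin (n+1))) : Type) → ℝ) → (Fin (n+1) → ℝ) :=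
    fun y => (S y)⁻¹ • num y with hfdef
  have hnum_nonneg : ∀ y i, 0 ≤ num y i := by
    intro y i
    rw [hnumdef]
    dsimp only
    split
    · exact zero_le_one
    · split
      · exact le_max_left _ _
      · exact le_refl 0
  have hS_ge : ∀ y, 1 ≤ S y := by
    intro y
    have h1 : num y i₀ = 1 := by rw [hnumdef]; simp [hi₀]
    calc (1:ℝ) = num y i₀ := h1.symm
      _ ≤ ∑ i, num y i := Finset.single_le_sum (fun i _ => hnum_nonneg y i) (Finset.mem_univ i₀)
      _ = S y := rfl
  have hS_pos : ∀ y, 0 < S y := fun y => lt_of_lt_of_le one_pos (hS_ge y)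
  -- The outer polyhedral bound P
  set P : Set (Fin (n+1) → ℝ) := {x | (∀ i, 0 ≤ x i) ∧ (∑ i, x i) = 1 ∧
      (∀ i ∈ I, ∀ i' ∈ I, x i = x i') ∧ (∀ i ∈ I, ∀ j, x j ≤ x i) ∧
      (∀ j, j ∉ J → x j = 0)} with hPdef
  have hind : ∀ (K : Finset (Fin (n+1))), (∑ j, (if j ∈ K then (1:ℝ) else 0)) = K.card := by
    intro K
    simp [Finset.sum_ite_mem]
  have hbaryK : ∀ K : Finset (Fin (n+1)), I ⊆ K → K ⊆ J → bary K ∈ P := by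
    intro K h1 h2
    have hKne : K.Nonempty := hI.mono h1
    have hKcard : (0:ℝ) < K.card := by exact_mod_cast Finset.card_pos.mpr hKne
    refine ⟨?_, ?_, ?_, ?_, ?_⟩
    · intro i; rw [hbary]; split
      · positivity
      · exact le_refl 0
    · have : (∑ i, bary K i) = ∑ i, (if i ∈ K then (1:ℝ)/K.card else 0) := by
        apply Finset.sum_congr rfl; intro i _; rw [hbary]
      rw [this]
      rw [Finset.sum_ite_mem, Finset.univ_inter, Finset.sum_const, nsmul_eq_mul]
      field_simp
    · intro i hiI i' hi'I
      rw [hbary, hbary, if_pos (h1 hiI), if_pos (h1 hi'I)]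
    · intro i hiI j
      rw [hbary, hbary, if_pos (h1 hiI)]
      split
      · exact le_refl _
      · positivity
    · intro j hj
      rw [hbary, if_neg (fun hjK => hj (h2 hjK))]
  have hPconv : Convex ℝ P := by
    intro x hx y hy a b ha hb hab
    obtain ⟨hx0, hxs, hxc, hxm, hxz⟩ := hx
    obtain ⟨hy0, hys, hyc, hym, hyz⟩ := hy
    refine ⟨?_, ?_, ?_, ?_, ?_⟩
    · intro i
      simp only [Pi.add_apply, Pi.smul_apply, smul_eq_mul]
      exact add_nonneg (mul_nonneg ha (hx0 i)) (mul_nonneg hb (hy0 i))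
    · simp only [Pi.add_apply, Pi.smul_apply, smul_eq_mul]
      rw [Finset.sum_add_distrib, ← Finset.mul_sum, ← Finset.mul_sum, hxs, hys]
      linarith
    · intro i hiI i' hi'I
      simp only [Pi.add_apply, Pi.smul_apply, smul_eq_mul]
      rw [hxc i hiI i' hi'I, hyc i hiI i' hi'I]
    · intro i hiI j
      simp only [Pi.add_apply, Pi.smul_apply, smul_eq_mul]
      exact add_le_add (mul_le_mul_of_nonneg_left (hxm i hiI j) ha)
        (mul_le_mul_of_nonneg_left (hym i hiI j) hb)
    · intro j hj
      simp only [Pi.add_apply, Pi.smul_apply, smul_eq_mul]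
      rw [hxz j hj, hyz j hj]
      ring
  have hcellP : cell I J ⊆ P := by
    rw [hcell]
    apply convexHull_min _ hPconv
    rintro x ⟨K, h1, h2, rfl⟩
    exact hbaryK K h1 h2
  constructor
  · -- part (a)
    refine ⟨f, ?_, ?_, ?_, ?_⟩
    · -- continuity
      have hnc : ∀ i, Continuous fun y => num y i := by
        intro i
        by_cases hiI : i ∈ I
        · have : (fun y => num y i) = fun _ => (1:ℝ) := by
            funext y; rw [hnumdef]; simp [hiI]
          rw [this]; exact continuous_const
        · by_cases hiJ : i ∈ J \ I
          · have : (fun y => num y i) = fun y => max 0 (min (y ⟨i, hiJ⟩) 1) := by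
              funext y; rw [hnumdef]; simp [hiI, hiJ, hclampdef]
            rw [this]
            exact continuous_const.max ((continuous_apply _).min continuous_const)
          · have : (fun y => num y i) = fun _ => (0:ℝ) := by
              funext y; rw [hnumdef]; simp [hiI, hiJ]
            rw [this]; exact continuous_const
      have hScont : Continuous S := by
        rw [hSdef]
        exact continuous_finset_sum _ (fun i _ => hnc i)
      rw [hfdef]
      exact Continuous.smul (hScont.inv₀ (fun y => ne_of_gt (hS_pos y))) (continuous_pi hnc)
    · -- MapsTo
      intro y hy
      have hclampy : ∀ j, clamp (y j) = y j := by
        intro j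
        rw [hclampdef]
        dsimp only
        rw [min_eq_left (hy j).2, max_eq_right (hy j).1]
      have hnum_eq : num y = fun i => if i ∈ I then (1:ℝ)
          else if h : i ∈ J \ I then y ⟨i, h⟩ else 0 := by
        funext i
        rw [hnumdef]
        dsimp only
        split
        · rfl
        · split
          · exact hclampy _
          · rfl
      have hmem := cube_mem_hull I J hIJ (J \ I) y hy (fun j hj => absurd j.2 hj)
      rw [← hnum_eq] at hmem
      rw [_root_.convexHull_eq] at hmem
      obtain ⟨κ, t, w, z, hw0, hw1, hz, hcm⟩ := hmem
      have hzK : ∀ i : κ, ∃ K : Finset (Fin (n+1)), i ∈ t →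
          (I ⊆ K ∧ K ⊆ J ∧ z i = fun j => if j ∈ K then (1:ℝ) else 0) := by
        intro i
        by_cases h : i ∈ t
        · obtain ⟨K, h1, h2, h3⟩ := hz i h
          exact ⟨K, fun _ => ⟨h1, h2, h3⟩⟩
        · exact ⟨I, fun hc => absurd hc h⟩
      choose K hK using hzK
      have hsum_z : num y = ∑ i ∈ t, w i • z i := by
        rw [← hcm, Finset.centerMass_eq_of_sum_1 _ _ hw1]
      set u : κ → ℝ := fun i => w i * (K i).card with hudef
      have hcard1 : ∀ i ∈ t, (1:ℝ) ≤ (K i).card := by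
        intro i hi
        have hne : (K i).Nonempty := hI.mono (hK i hi).1
        exact_mod_cast Nat.one_le_iff_ne_zero.mpr (Finset.card_pos.mpr hne).ne'
      have hu0 : ∀ i ∈ t, 0 ≤ u i := by
        intro i hi
        exact mul_nonneg (hw0 i hi) (by positivity)
      have husum : ∑ i ∈ t, u i = S y := by
        rw [hSdef]
        dsimp only
        calc ∑ i ∈ t, u i = ∑ i ∈ t, w i * (K i).card := rfl
          _ = ∑ i ∈ t, w i * (∑ j, z i j) := by
              apply Finset.sum_congr rfl
              intro i hi
              rw [(hK i hi).2.2, hind (K i)]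
          _ = ∑ i ∈ t, (∑ j, w i * z i j) := by
              apply Finset.sum_congr rfl
              intro i _
              rw [Finset.mul_sum]
          _ = ∑ j, (∑ i ∈ t, w i * z i j) := Finset.sum_comm
          _ = ∑ j, num y j := by
              apply Finset.sum_congr rfl
              intro j _
              rw [hsum_z]
              simp only [Finset.sum_apply, Pi.smul_apply, smul_eq_mul]
      have hupos : 0 < ∑ i ∈ t, u i := by rw [husum]; exact hS_pos y
      have hmem2 := Finset.centerMass_mem_convexHull t hu0 hupos
        (fun i hi => show bary (K i) ∈
            {x | ∃ K' : Finset (Fin (n+1)), I ⊆ K' ∧ K' ⊆ J ∧ x = bary K'} from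
          ⟨K i, (hK i hi).1, (hK i hi).2.1, rfl⟩)
      have hfy : t.centerMass u (fun i => bary (K i)) = f y := by
        rw [Finset.centerMass, husum, hfdef]
        dsimp only
        congr 1
        rw [hsum_z]
        apply Finset.sum_congr rfl
        intro i hi
        funext j
        have hcne : ((K i).card : ℝ) ≠ 0 := by
          have := hcard1 i hi; linarith
        simp only [Pi.smul_apply, smul_eq_mul, hudef, hbary, (hK i hi).2.2]
        split
        · field_simp
        · ring
      rw [hcell, ← hfy]
      exact hmem2
    · -- InjOn
      intro y hy y' hy' hfe
      have h0 : ∀ y', f y' i₀ = (S y')⁻¹ := by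
        intro y'
        rw [hfdef]
        simp only [Pi.smul_apply, smul_eq_mul]
        rw [hnumdef]
        simp [hi₀]
      have hSeq : S y = S y' := by
        apply inv_injective
        rw [← h0 y, ← h0 y', hfe]
      funext j
      have hjmem : (j : Fin (n+1)) ∈ J \ I := j.2
      have hjI : (j : Fin (n+1)) ∉ I := (Finset.mem_sdiff.mp j.2).2
      have hv : f y j = (S y)⁻¹ * y j := by
        rw [hfdef]
        simp only [Pi.smul_apply, smul_eq_mul]
        rw [hnumdef]
        simp only [hjI, if_false, hjmem, dif_pos]
        rw [Subtype.eta]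
        congr 1
        rw [hclampdef]
        dsimp only
        rw [min_eq_left (hy j).2, max_eq_right (hy j).1]
      have hv' : f y' j = (S y')⁻¹ * y' j := by
        rw [hfdef]
        simp only [Pi.smul_apply, smul_eq_mul]
        rw [hnumdef]
        simp only [hjI, if_false, hjmem, dif_pos]
        rw [Subtype.eta]
        congr 1
        rw [hclampdef]
        dsimp only
        rw [min_eq_left (hy' j).2, max_eq_right (hy' j).1]
      have heq : (S y)⁻¹ * y j = (S y')⁻¹ * y' j := by
        rw [← hv, ← hv', hfe]
      rw [← hSeq] at heq
      exact mul_left_cancel₀ (inv_ne_zero (hS_pos y).ne') heq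
    · -- SurjOn
      intro x hx
      obtain ⟨hx0, hxs, hxc, hxm, hxz⟩ := hcellP hx
      set m := x i₀ with hm
      have hmpos : 0 < m := by
        by_contra hle
        push_neg at hle
        have hz : ∀ i ∈ Finset.univ (α := Fin (n+1)), x i = 0 := fun i _ =>
          le_antisymm (le_trans (hxm i₀ hi₀ i) hle) (hx0 i)
        have : (∑ i, x i) = 0 := Finset.sum_eq_zero hz
        rw [hxs] at this
        norm_num at this
      refine ⟨fun j => x j / m, ?_, ?_⟩
      · intro j
        exact ⟨div_nonneg (hx0 _) hmpos.le, (div_le_one hmpos).mpr (hxm i₀ hi₀ _)⟩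
      · have hnum_x : num (fun j => x j / m) = fun i => x i / m := by
          funext i
          rw [hnumdef]
          dsimp only
          by_cases hiI : i ∈ I
          · rw [if_pos hiI, hxc i hiI i₀ hi₀, ← hm, div_self hmpos.ne']
          · rw [if_neg hiI]
            by_cases hiJ : i ∈ J \ I
            · rw [dif_pos hiJ, hclampdef]
              dsimp only
              rw [min_eq_left ((div_le_one hmpos).mpr (hxm i₀ hi₀ _)),
                max_eq_right (div_nonneg (hx0 _) hmpos.le)]
            · rw [dif_neg hiJ]
              have hiJ' : i ∉ J := fun h => hiJ (Finset.mem_sdiff.mpr ⟨h, hiI⟩)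
              rw [hxz i hiJ', zero_div]
        have hSx : S (fun j => x j / m) = m⁻¹ := by
          rw [hSdef]
          dsimp only
          rw [show (∑ i, num (fun j => x j / m) i) = ∑ i, x i / m from
            Finset.sum_congr rfl (fun i _ => by rw [hnum_x])]
          rw [← Finset.sum_div, hxs, one_div]
        rw [hfdef]
        dsimp only
        rw [hSx, hnum_x, inv_inv]
        funext i
        simp only [Pi.smul_apply, smul_eq_mul]
        field_simp
  · -- part (b)
    intro I' J' hI' hI'J'
    constructor
    · intro hsub
      have hbI' : bary I' ∈ cell I J := by
        apply hsub
        rw [hcell]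
        exact subset_convexHull ℝ _ ⟨I', Finset.Subset.refl I', hI'J', rfl⟩
      have hbJ' : bary J' ∈ cell I J := by
        apply hsub
        rw [hcell]
        exact subset_convexHull ℝ _ ⟨J', hI'J', Finset.Subset.refl J', rfl⟩
      obtain ⟨i₀', hi₀'⟩ := hI'
      have hI'card : (0:ℝ) < I'.card := by
        exact_mod_cast Finset.card_pos.mpr ⟨i₀', hi₀'⟩
      have hJ'card : (0:ℝ) < J'.card := by
        exact_mod_cast Finset.card_pos.mpr ⟨i₀', hI'J' hi₀'⟩
      constructor
      · intro i hiI
        by_contra hiI'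
        have h1 : bary I' i = 0 := by rw [hbary, if_neg hiI']
        have h2 : bary I' i₀' = 1 / I'.card := by rw [hbary, if_pos hi₀']
        have h3 := (hcellP hbI').2.2.2.1 i hiI i₀'
        rw [h1, h2] at h3
        have : (0:ℝ) < 1 / I'.card := one_div_pos.mpr hI'card
        linarith
      · intro j hjJ'
        by_contra hjJ
        have h1 : bary J' j = 0 := (hcellP hbJ').2.2.2.2 j hjJ
        rw [hbary, if_pos hjJ'] at h1
        have : (0:ℝ) < 1 / J'.card := by positivity
        linarith
    · rintro ⟨h1, h2⟩
      rw [hcell, hcell]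
      apply convexHull_mono
      rintro x ⟨K, hK1, hK2, rfl⟩
      exact ⟨K, h1.trans hK1, hK2.trans h2, rfl⟩
end
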